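/- Lemma 3 (E[R₃] ≤ 0 in the i.i.d. model): let 𝒳 ⊆ ℝ^d be nonempty compact convex, let (Ω, F, P) be a probability space with filtration (F_t)_{t≥0}, and let (f_t, g_t)_{t=1}^T be random pairs of continuous functions 𝒳 → ℝ, jointly measurable, uniformly bounded by B, independent and identically distributed across t with each (f_t, g_t) independent of F_{t−1}; write λ_t(x) = (f_t(x), g_t(x)) and μ(x) = E[λ_t(x)] ∈ ℝ² (independent of t). Let θ_1,…,θ_T : Ω → Δ₂ be such that θ_t is F_{t−1}-measurable. Then E[ min_{x∈𝒳} Σ_{t=1}^T ⟨θ_t, λ_t(x)⟩ ] ≤ T · min_{x∈𝒳} max_{θ∈Δ₂} ⟨θ, μ(x)⟩, i.e., the expectation of R₃ := min_{x∈𝒳} Σ_{t=1}^T ⟨θ_t, λ_t(x)⟩ − T · min_{x∈𝒳} max_{θ∈Δ₂} ⟨θ, μ(x)⟩ is at most 0. -/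

import Mathlib

open Finset MeasureTheory ProbabilityTheory

/-- **Lemma 3 (`E[R₃] ≤ 0` in the i.i.d. model).**
For i.i.d. pairs of continuous, uniformly bounded random losses `(f t, g t)` on a
nonempty compact convex set `𝒳`, each independent of `ℱ (t−1)`, with mean vector
`μ(x) = E[(f t x, g t x)]`, and `ℱ (t−1)`-measurable simplex weights `θ t`, we have
`E[ min_{x∈𝒳} Σ_t ⟨θ t, λ t(x)⟩ ] ≤ T · min_{x∈𝒳} max_{θ∈Δ₂} ⟨θ, μ(x)⟩`. -/
theorem expected_R3_nonpositive
    (d T : ℕ) (B : ℝ)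
    (X : Set (EuclideanSpace ℝ (Fin d)))
    (hXne : X.Nonempty) (hXcomp : IsCompact X) (hXconv : Convex ℝ X)
    (Ω : Type) [m : MeasurableSpace Ω] (P : Measure Ω) [IsProbabilityMeasure P]
    (ℱ : Filtration ℕ m)
    (f g : ℕ → Ω → EuclideanSpace ℝ (Fin d) → ℝ)
    (hcont : ∀ t ∈ Finset.Icc 1 T, ∀ ω, ContinuousOn (f t ω) X ∧ ContinuousOn (g t ω) X)
    (hjm : ∀ t ∈ Finset.Icc 1 T,
      Measurable (fun p : Ω × EuclideanSpace ℝ (Fin d) => f t p.1 p.2) ∧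
      Measurable (fun p : Ω × EuclideanSpace ℝ (Fin d) => g t p.1 p.2))
    (hbdd : ∀ t ∈ Finset.Icc 1 T, ∀ ω, ∀ y ∈ X, |f t ω y| ≤ B ∧ |g t ω y| ≤ B)
    (hident : ∀ s ∈ Finset.Icc 1 T, ∀ t ∈ Finset.Icc 1 T,
      IdentDistrib (fun ω => (f s ω, g s ω)) (fun ω => (f t ω, g t ω)) P P)
    (hindep : ∀ t ∈ Finset.Icc 1 T,
      Indep (MeasurableSpace.comap (fun ω => (f t ω, g t ω)) inferInstance)
        (ℱ (t - 1)) P)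
    (μ : EuclideanSpace ℝ (Fin d) → Fin 2 → ℝ)
    (hμ : ∀ t ∈ Finset.Icc 1 T, ∀ y ∈ X,
      (∫ ω, f t ω y ∂P) = μ y 0 ∧ (∫ ω, g t ω y ∂P) = μ y 1)
    (θ : ℕ → Ω → Fin 2 → ℝ)
    (hθmeas : ∀ t ∈ Finset.Icc 1 T, Measurable[ℱ (t - 1)] (θ t))
    (hθsimplex : ∀ t ∈ Finset.Icc 1 T, ∀ ω, θ t ω ∈ stdSimplex ℝ (Fin 2)) :
    (∫ ω, sInf ((fun y => ∑ t ∈ Finset.Icc 1 T,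
          (θ t ω 0 * f t ω y + θ t ω 1 * g t ω y)) '' X) ∂P)
      ≤ T * sInf ((fun y =>
          sSup ((fun ϑ => ϑ 0 * μ y 0 + ϑ 1 * μ y 1) '' stdSimplex ℝ (Fin 2))) '' X) := by

  classical
  set F : Ω → EuclideanSpace ℝ (Fin d) → ℝ := fun ω y => ∑ t ∈ Finset.Icc 1 T,
      (θ t ω 0 * f t ω y + θ t ω 1 * g t ω y) with hF
  set h : EuclideanSpace ℝ (Fin d) → ℝ := fun y =>
      sSup ((fun ϑ : Fin 2 → ℝ => ϑ 0 * μ y 0 + ϑ 1 * μ y 1) '' stdSimplex ℝ (Fin 2)) with hh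
  -- basic facts about θ
  have hθ01 : ∀ t ∈ Finset.Icc 1 T, ∀ ω, 0 ≤ θ t ω 0 ∧ 0 ≤ θ t ω 1 ∧ θ t ω 0 + θ t ω 1 = 1 := by
    intro t ht ω
    obtain ⟨hpos, hsum⟩ := hθsimplex t ht ω
    rw [Fin.sum_univ_two] at hsum
    exact ⟨hpos 0, hpos 1, hsum⟩
  -- pointwise bound on each summand
  have hterm_bdd : ∀ t ∈ Finset.Icc 1 T, ∀ ω, ∀ y ∈ X,
      |θ t ω 0 * f t ω y + θ t ω 1 * g t ω y| ≤ B := by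
    intro t ht ω y hy
    obtain ⟨h0, h1, hs⟩ := hθ01 t ht ω
    obtain ⟨hfb, hgb⟩ := hbdd t ht ω y hy
    have := abs_le.mp hfb; have := abs_le.mp hgb
    rw [abs_le]
    constructor <;> nlinarith [this.1, this.2, (abs_le.mp hfb).1, (abs_le.mp hfb).2]
  -- bound on F
  have hFbdd : ∀ ω, ∀ y ∈ X, |F ω y| ≤ T * B := by
    intro ω y hy
    calc |F ω y| ≤ ∑ t ∈ Finset.Icc 1 T, |θ t ω 0 * f t ω y + θ t ω 1 * g t ω y| :=
          Finset.abs_sum_le_sum_abs _ _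
      _ ≤ ∑ t ∈ Finset.Icc 1 T, B := Finset.sum_le_sum (fun t ht => hterm_bdd t ht ω y hy)
      _ = T * B := by rw [Finset.sum_const, Nat.card_Icc]; simp [nsmul_eq_mul]
  -- continuity of F ω on X
  have hFcont : ∀ ω, ContinuousOn (F ω) X := by
    intro ω
    apply continuousOn_finset_sum
    intro t ht
    exact ((continuousOn_const.mul (hcont t ht ω).1).add
      (continuousOn_const.mul (hcont t ht ω).2))
  -- measurability in ω of each evaluation
  have hθmeasm : ∀ t ∈ Finset.Icc 1 T, Measurable (θ t) := fun t ht =>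
    (hθmeas t ht).mono (ℱ.le (t - 1)) le_rfl
  have hfxm : ∀ t ∈ Finset.Icc 1 T, ∀ y : EuclideanSpace ℝ (Fin d), Measurable (fun ω => f t ω y) := by
    intro t ht y
    exact (hjm t ht).1.comp (measurable_id.prodMk measurable_const)
  have hgxm : ∀ t ∈ Finset.Icc 1 T, ∀ y : EuclideanSpace ℝ (Fin d), Measurable (fun ω => g t ω y) := by
    intro t ht y
    exact (hjm t ht).2.comp (measurable_id.prodMk measurable_const)
  have hFmeas : ∀ y : EuclideanSpace ℝ (Fin d), Measurable (fun ω => F ω y) := by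
    intro y
    apply Finset.measurable_sum
    intro t ht
    exact (((measurable_pi_apply 0).comp (hθmeasm t ht)).mul (hfxm t ht y)).add
      (((measurable_pi_apply 1).comp (hθmeasm t ht)).mul (hgxm t ht y))
  -- dense sequence in X
  haveI : Nonempty ↥X := hXne.to_subtype
  obtain ⟨v, hv⟩ := TopologicalSpace.exists_dense_seq ↥X
  have hbb : ∀ ω, BddBelow (F ω '' X) := by
    intro ω
    exact ⟨-(T*B), by rintro z ⟨y, hy, rfl⟩; linarith [(abs_le.mp (hFbdd ω y hy)).1]⟩
  have hbbr : ∀ ω, BddBelow (Set.range fun n => F ω (v n)) := by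
    intro ω
    exact ⟨-(T*B), by rintro z ⟨n, rfl⟩; linarith [(abs_le.mp (hFbdd ω _ (v n).2)).1]⟩
  have key : ∀ ω, sInf (F ω '' X) = ⨅ n, F ω (v n) := by
    intro ω
    apply le_antisymm
    · exact le_ciInf fun n => csInf_le (hbb ω) (Set.mem_image_of_mem _ (v n).2)
    · refine le_csInf (hXne.image _) ?_
      rintro b ⟨y, hy, rfl⟩
      obtain ⟨w, hw1, hw2⟩ := mem_closure_iff_seq_limit.mp
        (hv.closure_eq ▸ Set.mem_univ (⟨y, hy⟩ : ↥X) :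
          (⟨y, hy⟩ : ↥X) ∈ closure (Set.range v))
      have hcoe : Filter.Tendsto (fun k => (w k : EuclideanSpace ℝ (Fin d))) Filter.atTop (nhdsWithin y X) := by
        rw [tendsto_nhdsWithin_iff]
        exact ⟨(continuous_subtype_val.tendsto _).comp hw2,
          Filter.Eventually.of_forall fun k => (w k).2⟩
      have hlim : Filter.Tendsto (fun k => F ω (w k)) Filter.atTop (nhds (F ω y)) :=
        ((hFcont ω y hy).tendsto).comp hcoe
      refine ge_of_tendsto hlim (Filter.Eventually.of_forall fun k => ?_)
      obtain ⟨n, hn⟩ := hw1 k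
      calc ⨅ n, F ω (v n) ≤ F ω (v n) := ciInf_le (hbbr ω) n
        _ = F ω (w k) := by rw [hn]
  set G : Ω → ℝ := fun ω => ⨅ n, F ω (v n) with hG
  have hGmeas : Measurable G := Measurable.iInf (fun n => hFmeas _)
  have hGbdd : ∀ ω, |G ω| ≤ T * B := by
    intro ω
    rw [abs_le]
    constructor
    · exact le_ciInf fun n => (abs_le.mp (hFbdd ω _ (v n).2)).1
    · calc G ω ≤ F ω (v 0) := ciInf_le (hbbr ω) 0
        _ ≤ T*B := (abs_le.mp (hFbdd ω _ (v 0).2)).2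
  have hGint : Integrable G P := by
    refine Integrable.mono' (integrable_const ((T:ℝ)*B)) hGmeas.aestronglyMeasurable ?_
    exact Filter.Eventually.of_forall fun ω => by simpa using hGbdd ω
  -- integrability of each term at a fixed point
  have htermint : ∀ t ∈ Finset.Icc 1 T, ∀ y ∈ X,
      Integrable (fun ω => θ t ω 0 * f t ω y + θ t ω 1 * g t ω y) P := by
    intro t ht y hy
    refine Integrable.mono' (integrable_const B) ?_ ?_
    · exact ((((measurable_pi_apply 0).comp (hθmeasm t ht)).mul (hfxm t ht y)).add
        (((measurable_pi_apply 1).comp (hθmeasm t ht)).mul (hgxm t ht y))).aestronglyMeasurable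
    · exact Filter.Eventually.of_forall fun ω => by simpa using hterm_bdd t ht ω y hy
  have hθiint : ∀ t ∈ Finset.Icc 1 T, ∀ i : Fin 2, Integrable (fun ω => θ t ω i) P := by
    intro t ht i
    refine Integrable.mono' (integrable_const 1) ?_ ?_
    · exact ((measurable_pi_apply i).comp (hθmeasm t ht)).aestronglyMeasurable
    · refine Filter.Eventually.of_forall fun ω => ?_
      obtain ⟨h0, h1, hs⟩ := hθ01 t ht ω
      fin_cases i <;> simp [abs_le] <;> constructor <;> linarith
  -- expected θ lies in the simplex
  have hEθ : ∀ t ∈ Finset.Icc 1 T,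
      (fun i => ∫ ω, θ t ω i ∂P) ∈ stdSimplex ℝ (Fin 2) := by
    intro t ht
    constructor
    · intro i
      exact integral_nonneg fun ω => by
        obtain ⟨h0, h1, hs⟩ := hθ01 t ht ω
        fin_cases i <;> simpa
    · rw [Fin.sum_univ_two, ← integral_add (hθiint t ht 0) (hθiint t ht 1)]
      have : ∀ ω, θ t ω 0 + θ t ω 1 = (1:ℝ) := fun ω => (hθ01 t ht ω).2.2
      simp only [this]
      simp
  -- independence factorization
  have hprod : ∀ t ∈ Finset.Icc 1 T, ∀ y ∈ X,
      (∫ ω, θ t ω 0 * f t ω y + θ t ω 1 * g t ω y ∂P)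
        = (∫ ω, θ t ω 0 ∂P) * μ y 0 + (∫ ω, θ t ω 1 ∂P) * μ y 1 := by
    intro t ht y hy
    have hcomapθ : ∀ i : Fin 2, MeasurableSpace.comap (fun ω => θ t ω i) inferInstance
        ≤ ℱ (t - 1) := by
      intro i
      have hrw : (fun ω => θ t ω i) = (fun q : Fin 2 → ℝ => q i) ∘ θ t := rfl
      rw [hrw, ← MeasurableSpace.comap_comp]
      exact le_trans (MeasurableSpace.comap_mono (measurable_pi_apply i).comap_le)
        (hθmeas t ht).comap_le
    have hcomapf : MeasurableSpace.comap (fun ω => f t ω y) inferInstance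
        ≤ MeasurableSpace.comap (fun ω => (f t ω, g t ω)) inferInstance := by
      have hrw : (fun ω => f t ω y)
          = (fun p : (EuclideanSpace ℝ (Fin d) → ℝ) × (EuclideanSpace ℝ (Fin d) → ℝ) => p.1 y) ∘ (fun ω => (f t ω, g t ω)) := rfl
      rw [hrw, ← MeasurableSpace.comap_comp]
      exact MeasurableSpace.comap_mono ((measurable_pi_apply y).comp measurable_fst).comap_le
    have hcomapg : MeasurableSpace.comap (fun ω => g t ω y) inferInstance
        ≤ MeasurableSpace.comap (fun ω => (f t ω, g t ω)) inferInstance := by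
      have hrw : (fun ω => g t ω y)
          = (fun p : (EuclideanSpace ℝ (Fin d) → ℝ) × (EuclideanSpace ℝ (Fin d) → ℝ) => p.2 y) ∘ (fun ω => (f t ω, g t ω)) := rfl
      rw [hrw, ← MeasurableSpace.comap_comp]
      exact MeasurableSpace.comap_mono ((measurable_pi_apply y).comp measurable_snd).comap_le
    have hif : IndepFun (fun ω => f t ω y) (fun ω => θ t ω 0) P :=
      (IndepFun_iff_Indep _ _ _).mpr
        (indep_of_indep_of_le_right (indep_of_indep_of_le_left (hindep t ht) hcomapf)
          (hcomapθ 0))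
    have hig : IndepFun (fun ω => g t ω y) (fun ω => θ t ω 1) P :=
      (IndepFun_iff_Indep _ _ _).mpr
        (indep_of_indep_of_le_right (indep_of_indep_of_le_left (hindep t ht) hcomapg)
          (hcomapθ 1))
    have hmulf := hif.integral_mul_eq_mul_integral ((hfxm t ht y).aestronglyMeasurable (μ := P))
      (((measurable_pi_apply 0).comp (hθmeasm t ht)).aestronglyMeasurable (μ := P))
    have hmulg := hig.integral_mul_eq_mul_integral ((hgxm t ht y).aestronglyMeasurable (μ := P))
      (((measurable_pi_apply 1).comp (hθmeasm t ht)).aestronglyMeasurable (μ := P))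
    have hfint : Integrable (fun ω => θ t ω 0 * f t ω y) P := by
      refine Integrable.mono' (integrable_const B) ?_ ?_
      · exact (((measurable_pi_apply 0).comp (hθmeasm t ht)).mul
          (hfxm t ht y)).aestronglyMeasurable
      · refine Filter.Eventually.of_forall fun ω => ?_
        obtain ⟨h0, h1, hs⟩ := hθ01 t ht ω
        have := abs_le.mp (hbdd t ht ω y hy).1
        rw [Real.norm_eq_abs, abs_mul, abs_of_nonneg h0]
        nlinarith [abs_nonneg (f t ω y), this.1, this.2, abs_le.mpr this]
    have hgint : Integrable (fun ω => θ t ω 1 * g t ω y) P := by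
      refine Integrable.mono' (integrable_const B) ?_ ?_
      · exact (((measurable_pi_apply 1).comp (hθmeasm t ht)).mul
          (hgxm t ht y)).aestronglyMeasurable
      · refine Filter.Eventually.of_forall fun ω => ?_
        obtain ⟨h0, h1, hs⟩ := hθ01 t ht ω
        have := abs_le.mp (hbdd t ht ω y hy).2
        rw [Real.norm_eq_abs, abs_mul, abs_of_nonneg h1]
        nlinarith [abs_nonneg (g t ω y), this.1, this.2, abs_le.mpr this]
    rw [integral_add hfint hgint]
    have e1 : (∫ ω, θ t ω 0 * f t ω y ∂P) = (∫ ω, θ t ω 0 ∂P) * (∫ ω, f t ω y ∂P) := by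
      rw [show (∫ ω, θ t ω 0 * f t ω y ∂P)
          = ∫ ω, ((fun ω => f t ω y) * fun ω => θ t ω 0) ω ∂P from by
            simp [Pi.mul_apply, mul_comm], hmulf, mul_comm]
    have e2 : (∫ ω, θ t ω 1 * g t ω y ∂P) = (∫ ω, θ t ω 1 ∂P) * (∫ ω, g t ω y ∂P) := by
      rw [show (∫ ω, θ t ω 1 * g t ω y ∂P)
          = ∫ ω, ((fun ω => g t ω y) * fun ω => θ t ω 1) ω ∂P from by
            simp [Pi.mul_apply, mul_comm], hmulg, mul_comm]
    rw [e1, e2, (hμ t ht y hy).1, (hμ t ht y hy).2]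
  -- sSup bound: ⟨ϑ, μ y⟩ ≤ h y for ϑ ∈ simplex
  have hbAbove : ∀ y : EuclideanSpace ℝ (Fin d), BddAbove ((fun ϑ : Fin 2 → ℝ => ϑ 0 * μ y 0 + ϑ 1 * μ y 1)
      '' stdSimplex ℝ (Fin 2)) := by
    intro y
    refine ⟨|μ y 0| + |μ y 1|, ?_⟩
    rintro z ⟨ϑ, hϑ, rfl⟩
    obtain ⟨hpos, hsum⟩ := hϑ
    rw [Fin.sum_univ_two] at hsum
    have h0 := hpos 0; have h1 := hpos 1
    have m0 := le_abs_self (μ y 0); have m1 := le_abs_self (μ y 1)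
    have a0 := abs_nonneg (μ y 0); have a1 := abs_nonneg (μ y 1)
    show ϑ 0 * μ y 0 + ϑ 1 * μ y 1 ≤ |μ y 0| + |μ y 1|
    have c0 : ϑ 0 * μ y 0 ≤ ϑ 0 * |μ y 0| := mul_le_mul_of_nonneg_left m0 h0
    have c1 : ϑ 1 * μ y 1 ≤ ϑ 1 * |μ y 1| := mul_le_mul_of_nonneg_left m1 h1
    have d0 : ϑ 0 * |μ y 0| ≤ |μ y 0| := mul_le_of_le_one_left a0 (by linarith)
    have d1 : ϑ 1 * |μ y 1| ≤ |μ y 1| := mul_le_of_le_one_left a1 (by linarith)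
    linarith
  -- main bound for each fixed x ∈ X
  have hmain : ∀ x ∈ X, (∫ ω, G ω ∂P) ≤ T * h x := by
    intro x hx
    have step1 : (∫ ω, G ω ∂P) ≤ ∫ ω, F ω x ∂P := by
      refine integral_mono hGint ?_ ?_
      · apply integrable_finset_sum
        intro t ht
        exact htermint t ht x hx
      · intro ω
        rw [hG]
        exact le_trans (le_of_eq (key ω).symm)
          (csInf_le (hbb ω) (Set.mem_image_of_mem _ hx))
    have step2 : (∫ ω, F ω x ∂P)
        = ∑ t ∈ Finset.Icc 1 T,
            ((∫ ω, θ t ω 0 ∂P) * μ x 0 + (∫ ω, θ t ω 1 ∂P) * μ x 1) := by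
      rw [hF]
      rw [integral_finset_sum _ (fun t ht => htermint t ht x hx)]
      exact Finset.sum_congr rfl fun t ht => hprod t ht x hx
    have step3 : ∀ t ∈ Finset.Icc 1 T,
        (∫ ω, θ t ω 0 ∂P) * μ x 0 + (∫ ω, θ t ω 1 ∂P) * μ x 1 ≤ h x := by
      intro t ht
      exact le_csSup (hbAbove x) ⟨_, hEθ t ht, rfl⟩
    calc (∫ ω, G ω ∂P) ≤ ∫ ω, F ω x ∂P := step1
      _ = _ := step2
      _ ≤ ∑ t ∈ Finset.Icc 1 T, h x := Finset.sum_le_sum step3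
      _ = T * h x := by rw [Finset.sum_const, Nat.card_Icc]; simp [nsmul_eq_mul]
  -- rewrite the goal integrand as G
  have hrwgoal : (fun ω => sInf ((fun y => ∑ t ∈ Finset.Icc 1 T,
      (θ t ω 0 * f t ω y + θ t ω 1 * g t ω y)) '' X)) = G := by
    funext ω
    exact key ω
  rw [show (∫ ω, sInf ((fun y => ∑ t ∈ Finset.Icc 1 T,
      (θ t ω 0 * f t ω y + θ t ω 1 * g t ω y)) '' X) ∂P) = ∫ ω, G ω ∂P from by
        rw [← hrwgoal]]
  -- conclude
  rcases Nat.eq_zero_or_pos T with hT0 | hTpos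
  · subst hT0
    have := hmain hXne.choose hXne.choose_spec
    simpa using this
  · have hTpos' : (0:ℝ) < T := by exact_mod_cast hTpos
    have hle : (∫ ω, G ω ∂P) / T ≤ sInf (h '' X) := by
      refine le_csInf (hXne.image h) ?_
      rintro b ⟨x, hx, rfl⟩
      rw [div_le_iff₀ hTpos']
      calc (∫ ω, G ω ∂P) ≤ T * h x := hmain x hx
        _ = h x * T := mul_comm _ _
    calc (∫ ω, G ω ∂P) = ((∫ ω, G ω ∂P) / T) * T := by field_simp
      _ ≤ sInf (h '' X) * T := mul_le_mul_of_nonneg_right hle (le_of_lt hTpos')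
      _ = T * sInf (h '' X) := mul_comm _ _
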